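/- Let K : D × [0, t₀] → ℝ be C² in t on a compact convex set D ⊂ ℝ², let μ_m(t) = K(I_m, t) and μ_n(t) = K(I_n, t) with I_m, I_n ∈ D, and suppose |∂_t μ_m(t_*) − ∂_t μ_n(t_*)| ≥ C h^{3/4} for some t_* and that the second t-derivatives are uniformly bounded by M. Fix γ > 3/2. Then there are constants C̃₁, C̃₂ > 0 (depending only on C, M) such that for all sufficiently small h > 0, the set {t ∈ [t_* − C̃₁ h^{3/4}, t_* + C̃₁ h^{3/4}] : |μ_m(t) − μ_n(t)| < h^γ} has Lebesgue measure at most C̃₂ h^{γ − 3/4}, which is at most C̃₂ h^{γ−3/2} · h^{3/4}. -/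

import Mathlib

open MeasureTheory

lemma key_measure (f : ℝ → ℝ) (hf : Differentiable ℝ f) (a b c ε : ℝ) (hc : 0 < c)
    (hg : ∀ t ∈ Set.Icc a b, c ≤ deriv f t) :
    volume {t ∈ Set.Icc a b | |f t| < ε} ≤ ENNReal.ofReal (4 * ε / c) := by
  set S := {t ∈ Set.Icc a b | |f t| < ε} with hS
  rcases S.eq_empty_or_nonempty with h | ⟨x, hx⟩
  · simp [h]
  · have hεpos : 0 < ε := lt_of_le_of_lt (abs_nonneg _) hx.2
    have hmono : MonotoneOn (fun t => f t - c * t) (Set.Icc a b) := by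
      apply monotoneOn_of_deriv_nonneg (convex_Icc a b)
      · exact (hf.sub (differentiable_id.const_mul c)).continuous.continuousOn
      · exact (hf.sub (differentiable_id.const_mul c)).differentiableOn
      · intro t ht
        have h1 : deriv (fun t => f t - c * t) t = deriv f t - c := by
          have hd : HasDerivAt (fun t => f t - c * t) (deriv f t - c * 1) t :=
            ((hf t).hasDerivAt).sub ((hasDerivAt_id t).const_mul c)
          simpa using hd.deriv
        rw [h1]
        have := hg t (interior_subset ht)
        linarith
    have hdist : ∀ u ∈ S, ∀ v ∈ S, u ≤ v → v - u ≤ 2 * ε / c := by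
      intro u hu v hv huv
      have h1 := hmono hu.1 hv.1 huv
      simp only at h1
      have h2 : c * (v - u) ≤ f v - f u := by linarith
      have h3 : f v - f u < 2 * ε := by
        have hu' := abs_lt.mp hu.2
        have hv' := abs_lt.mp hv.2
        linarith
      rw [le_div_iff₀ hc]
      nlinarith
    have hsub : S ⊆ Metric.closedBall x (2 * ε / c) := by
      intro y hy
      rw [Metric.mem_closedBall, Real.dist_eq]
      rcases le_total x y with hxy | hxy
      · rw [abs_of_nonneg (by linarith)]
        linarith [hdist x hx y hy hxy]
      · rw [abs_of_nonpos (by linarith)]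
        linarith [hdist y hy x hx hxy]
    calc volume S ≤ volume (Metric.closedBall x (2 * ε / c)) := measure_mono hsub
      _ = ENNReal.ofReal (2 * (2 * ε / c)) := Real.volume_closedBall _ _
      _ = ENNReal.ofReal (4 * ε / c) := by rw [show 2 * (2 * ε / c) = 4 * ε / c by ring]

theorem stmt_2 (D : Set (EuclideanSpace ℝ (Fin 2))) (hDcomp : IsCompact D)
    (hDconv : Convex ℝ D) (t₀ : ℝ) (ht₀ : 0 < t₀)
    (K : EuclideanSpace ℝ (Fin 2) → ℝ → ℝ)
    (I_m I_n : EuclideanSpace ℝ (Fin 2)) (hIm : I_m ∈ D) (hIn : I_n ∈ D)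
    (hK : ∀ I ∈ D, ContDiff ℝ 2 (K I))
    (C M γ : ℝ) (hC : 0 < C) (hM : 0 < M) (hγ : 3/2 < γ)
    (hsecond : ∀ I ∈ D, ∀ t ∈ Set.Icc 0 t₀, |deriv (deriv (K I)) t| ≤ M) :
    ∃ C1 > (0 : ℝ), ∃ C2 > (0 : ℝ), ∃ h₁ > (0 : ℝ), ∀ h : ℝ, 0 < h → h < h₁ →
      ∀ t_star ∈ Set.Icc 0 t₀,
        C * h ^ ((3 : ℝ)/4) ≤ |deriv (K I_m) t_star - deriv (K I_n) t_star| →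
        volume {t ∈ Set.Icc (t_star - C1 * h ^ ((3 : ℝ)/4)) (t_star + C1 * h ^ ((3 : ℝ)/4)) |
            |K I_m t - K I_n t| < h ^ γ} ≤
          ENNReal.ofReal (C2 * h ^ (γ - 3/4)) ∧
        C2 * h ^ (γ - 3/4) ≤ C2 * h ^ (γ - 3/2) * h ^ ((3 : ℝ)/4) := by
  set f : ℝ → ℝ := fun t => K I_m t - K I_n t with hfdef
  have hf2 : ContDiff ℝ 2 f := (hK I_m hIm).sub (hK I_n hIn)
  have hfd : Differentiable ℝ f := hf2.differentiable (by norm_num)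
  have hf2' : ContDiff ℝ (1 + 1) f := by
    convert hf2 using 2
    exact one_add_one_eq_two
  have hg1 : ContDiff ℝ 1 (deriv f) := (contDiff_succ_iff_deriv.mp hf2').2.2
  have hgd : Differentiable ℝ (deriv f) := hg1.differentiable one_ne_zero
  have hg'c : Continuous (deriv (deriv f)) := (contDiff_one_iff_deriv.mp hg1).2
  obtain ⟨B, hB⟩ := (isCompact_Icc (a := (-1:ℝ)) (b := t₀ + 1)).exists_bound_of_continuousOn
    hg'c.continuousOn
  set B' : ℝ := max B 1 with hB'def
  have hB'1 : (1:ℝ) ≤ B' := le_max_right _ _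
  have hB'0 : (0:ℝ) < B' := by linarith
  have hBle : ∀ t ∈ Set.Icc (-1:ℝ) (t₀ + 1), ‖deriv (deriv f) t‖ ≤ B' :=
    fun t ht => (hB t ht).trans (le_max_left _ _)
  refine ⟨min (C / (4 * B')) 1, by positivity, 16 / (3 * C), by positivity, 1, one_pos, ?_⟩
  intro h hh hh1 t_star hts hyp
  set C1 := min (C / (4 * B')) 1 with hC1def
  have hC10 : 0 < C1 := by positivity
  have hC11 : C1 ≤ 1 := min_le_right _ _
  have hp : (0:ℝ) < h ^ ((3:ℝ)/4) := Real.rpow_pos_of_pos hh _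
  have hp1 : h ^ ((3:ℝ)/4) ≤ 1 := Real.rpow_le_one hh.le hh1.le (by norm_num)
  set δ := C1 * h ^ ((3:ℝ)/4) with hδdef
  have hδ0 : 0 < δ := by positivity
  have hδ1 : δ ≤ 1 := by
    calc δ ≤ 1 * 1 := mul_le_mul hC11 hp1 hp.le one_pos.le
      _ = 1 := one_mul 1
  have hJsub : Set.Icc (t_star - δ) (t_star + δ) ⊆ Set.Icc (-1:ℝ) (t₀ + 1) := by
    intro t ht
    exact ⟨by linarith [ht.1, hts.1], by linarith [ht.2, hts.2]⟩
  have hder : ∀ t, deriv f t = deriv (K I_m) t - deriv (K I_n) t := by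
    intro t
    rw [hfdef]
    exact deriv_sub (((hK I_m hIm).differentiable (by norm_num)) t)
      (((hK I_n hIn).differentiable (by norm_num)) t)
  have hyp' : C * h ^ ((3:ℝ)/4) ≤ |deriv f t_star| := by rw [hder]; exact hyp
  have htsJ : t_star ∈ Set.Icc (t_star - δ) (t_star + δ) := ⟨by linarith, by linarith⟩
  have hlip : ∀ t ∈ Set.Icc (t_star - δ) (t_star + δ),
      |deriv f t - deriv f t_star| ≤ C / 4 * h ^ ((3:ℝ)/4) := by
    intro t ht
    have h1 := Convex.norm_image_sub_le_of_norm_deriv_le (f := deriv f)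
      (fun x _ => hgd x) (fun x hx => hBle x (hJsub hx)) (convex_Icc _ _) htsJ ht
    have h2 : ‖t - t_star‖ ≤ δ := by
      rw [Real.norm_eq_abs, abs_le]
      exact ⟨by linarith [ht.1], by linarith [ht.2]⟩
    have h3 : B' * ‖t - t_star‖ ≤ B' * δ := by
      exact mul_le_mul_of_nonneg_left h2 hB'0.le
    have h4 : B' * δ ≤ C / 4 * h ^ ((3:ℝ)/4) := by
      have h5 : B' * C1 ≤ C / 4 := by
        calc B' * C1 ≤ B' * (C / (4 * B')) :=
              mul_le_mul_of_nonneg_left (min_le_left _ _) hB'0.le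
          _ = C / 4 := by field_simp
      calc B' * δ = B' * C1 * h ^ ((3:ℝ)/4) := by rw [hδdef]; ring
        _ ≤ C / 4 * h ^ ((3:ℝ)/4) := mul_le_mul_of_nonneg_right h5 hp.le
    rw [Real.norm_eq_abs] at h1
    linarith
  set σ : ℝ := if 0 ≤ deriv f t_star then 1 else -1 with hσdef
  have hσabs : |σ| = 1 := by rw [hσdef]; split <;> norm_num
  have hσg : C * h ^ ((3:ℝ)/4) ≤ σ * deriv f t_star := by
    rw [hσdef]
    split
    · rw [one_mul]
      rwa [abs_of_nonneg ‹_›] at hyp'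
    · push_neg at *
      rw [abs_of_neg (by assumption)] at hyp'
      linarith
  set F := fun t => σ * f t with hFdef
  have hFd : Differentiable ℝ F := hfd.const_mul σ
  have hFder : ∀ t, deriv F t = σ * deriv f t := fun t => deriv_const_mul σ (hfd t)
  have hlow : ∀ t ∈ Set.Icc (t_star - δ) (t_star + δ),
      3 * C / 4 * h ^ ((3:ℝ)/4) ≤ deriv F t := by
    intro t ht
    rw [hFder]
    have h1 := hlip t ht
    have h2 : |σ * deriv f t - σ * deriv f t_star| ≤ C / 4 * h ^ ((3:ℝ)/4) := by
      rw [← mul_sub, abs_mul, hσabs, one_mul]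
      exact h1
    have h3 := abs_le.mp h2
    linarith [h3.1]
  have hc3 : 0 < 3 * C / 4 * h ^ ((3:ℝ)/4) := by positivity
  have hkey := key_measure F hFd (t_star - δ) (t_star + δ) _ (h ^ γ) hc3 hlow
  have hsets : {t ∈ Set.Icc (t_star - δ) (t_star + δ) | |F t| < h ^ γ} =
      {t ∈ Set.Icc (t_star - δ) (t_star + δ) | |K I_m t - K I_n t| < h ^ γ} := by
    ext t
    simp only [Set.mem_setOf_eq, hFdef, abs_mul, hσabs, one_mul, hfdef]
  rw [hsets] at hkey
  constructor
  · refine hkey.trans ?_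
    apply ENNReal.ofReal_le_ofReal
    have heq : 4 * h ^ γ / (3 * C / 4 * h ^ ((3:ℝ)/4)) = 16 / (3 * C) * (h ^ γ / h ^ ((3:ℝ)/4)) := by
      field_simp
      ring
    rw [heq, ← Real.rpow_sub hh]
  · have hexp : γ - 3/4 = (γ - 3/2) + 3/4 := by ring
    rw [hexp, Real.rpow_add hh, ← mul_assoc]
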